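/- Let H be an n×n real symmetric matrix, g ∈ ℝⁿ, f₀ ∈ ℝ and σ > 0, and let m(s) = f₀ + gᵀs + (1/2)sᵀHs + (σ/3)‖s‖³ be the cubic regularized model. If s* ∈ ℝⁿ is a global minimizer of m over ℝⁿ (i.e. m(s*) ≤ m(s) for all s ∈ ℝⁿ), then, setting λ* = σ‖s*‖, the vector s* satisfies (H + λ*I)s* = −g and the matrix H + λ*I is positive semidefinite. -/

import Mathlib

open Matrix Filter Topology

private lemma dot_inner {n : ℕ} (x y : EuclideanSpace ℝ (Fin n)) :
    (x : Fin n → ℝ) ⬝ᵥ y = inner ℝ x y := by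
  simp [dotProduct, PiLp.inner_apply, RCLike.inner_apply, mul_comm]

private lemma normsq_line {n : ℕ} (x w : EuclideanSpace ℝ (Fin n)) (t : ℝ) :
    ‖x + t • w‖ ^ 2 = ‖x‖ ^ 2 + 2 * t * ((x : Fin n → ℝ) ⬝ᵥ w) + t ^ 2 * ‖w‖ ^ 2 := by
  rw [norm_add_sq_real, real_inner_smul_right, norm_smul, dot_inner]
  simp [mul_pow]
  ring

private lemma dot_self_eq_normsq {n : ℕ} (x : EuclideanSpace ℝ (Fin n)) :
    (x : Fin n → ℝ) ⬝ᵥ x = ‖x‖ ^ 2 := by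
  rw [dot_inner]; exact real_inner_self_eq_norm_sq x

private lemma coe_line {n : ℕ} (x w : EuclideanSpace ℝ (Fin n)) (t : ℝ) :
    ((x + t • w : EuclideanSpace ℝ (Fin n)) : Fin n → ℝ)
      = (x : Fin n → ℝ) + t • (w : Fin n → ℝ) := rfl

private lemma hasDerivAt_norm_cube {n : ℕ} (x w : EuclideanSpace ℝ (Fin n)) :
    HasDerivAt (fun t : ℝ => ‖x + t • w‖ ^ 3)
      (3 * ‖x‖ * ((x : Fin n → ℝ) ⬝ᵥ w)) 0 := by
  set c : ℝ := (x : Fin n → ℝ) ⬝ᵥ w with hc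
  have hq : HasDerivAt (fun t : ℝ => ‖x‖ ^ 2 + 2 * t * c + t ^ 2 * ‖w‖ ^ 2) (2 * c) 0 := by
    have h1 := (((hasDerivAt_id (0:ℝ)).const_mul 2).mul_const c).const_add (‖x‖^2)
    have h2 := (hasDerivAt_pow 2 (0:ℝ)).mul_const (‖w‖^2)
    simpa [Pi.add_def] using h1.add h2
  have h3 := hq.rpow_const (p := 3/2) (Or.inr (by norm_num))
  have key : ∀ t : ℝ, (‖x‖ ^ 2 + 2 * t * c + t ^ 2 * ‖w‖ ^ 2) ^ (3/2 : ℝ) = ‖x + t • w‖ ^ 3 := by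
    intro t
    rw [← normsq_line x w t]
    rw [← Real.rpow_natCast (‖x + t • w‖) 2, ← Real.rpow_mul (norm_nonneg _)]
    norm_num
  have h4 : HasDerivAt (fun t : ℝ => ‖x + t • w‖ ^ 3)
      (2 * c * (3/2) * (‖x‖ ^ 2 + 2 * 0 * c + 0 ^ 2 * ‖w‖ ^ 2) ^ ((3:ℝ)/2 - 1)) 0 := by
    refine HasDerivAt.congr_of_eventuallyEq h3 ?_
    filter_upwards with t using (key t).symm
  convert h4 using 1
  have e1 : ((3:ℝ)/2 - 1) = (1/2 : ℝ) := by norm_num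
  have e2 : (‖x‖ ^ 2 + 2 * 0 * c + 0 ^ 2 * ‖w‖ ^ 2) = ‖x‖^2 := by ring
  rw [e1, e2, ← Real.rpow_natCast (‖x‖) 2, ← Real.rpow_mul (norm_nonneg _)]
  norm_num
  ring

theorem cubic_model_global_minimizer_first_order
    (n : ℕ) (H : Matrix (Fin n) (Fin n) ℝ) (hH : H.IsSymm)
    (g : EuclideanSpace ℝ (Fin n)) (f₀ σ : ℝ) (hσ : 0 < σ)
    (m : EuclideanSpace ℝ (Fin n) → ℝ)
    (hm : ∀ s : EuclideanSpace ℝ (Fin n),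
      m s = f₀ + g ⬝ᵥ s + (1 / 2) * (s ⬝ᵥ H.mulVec s) + (σ / 3) * ‖s‖ ^ 3)
    (sstar : EuclideanSpace ℝ (Fin n))
    (hmin : ∀ s : EuclideanSpace ℝ (Fin n), m sstar ≤ m s) :
    (H + (σ * ‖sstar‖) • (1 : Matrix (Fin n) (Fin n) ℝ)).mulVec sstar = -g ∧
      (H + (σ * ‖sstar‖) • (1 : Matrix (Fin n) (Fin n) ℝ)).PosSemidef := by
  set lam : ℝ := σ * ‖sstar‖ with hlam
  have hsym : ∀ x y : Fin n → ℝ, x ⬝ᵥ H.mulVec y = y ⬝ᵥ H.mulVec x := by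
    intro x y
    rw [dotProduct_mulVec, ← mulVec_transpose, hH.eq, dotProduct_comm]
  -- expansion of the model along a line
  have hline : ∀ (w : EuclideanSpace ℝ (Fin n)) (t : ℝ), m (sstar + t • w) =
      (f₀ + (g : Fin n → ℝ) ⬝ᵥ sstar + (1/2) * ((sstar : Fin n → ℝ) ⬝ᵥ H.mulVec sstar))
      + t * ((g : Fin n → ℝ) ⬝ᵥ w + (sstar : Fin n → ℝ) ⬝ᵥ H.mulVec w)
      + t ^ 2 * ((1/2) * ((w : Fin n → ℝ) ⬝ᵥ H.mulVec w))
      + (σ/3) * ‖sstar + t • w‖ ^ 3 := by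
    intro w t
    rw [hm, coe_line, dotProduct_add, dotProduct_smul, mulVec_add, mulVec_smul,
      add_dotProduct, smul_dotProduct, dotProduct_add, dotProduct_smul,
      dotProduct_add, dotProduct_smul, hsym w sstar]
    simp only [smul_eq_mul]
    ring
  -- first-order condition
  have hstat : ∀ w : EuclideanSpace ℝ (Fin n),
      (g : Fin n → ℝ) ⬝ᵥ w + (sstar : Fin n → ℝ) ⬝ᵥ H.mulVec w
        + lam * ((sstar : Fin n → ℝ) ⬝ᵥ w) = 0 := by
    intro w
    have hd : HasDerivAt (fun t : ℝ => m (sstar + t • w))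
        ((g : Fin n → ℝ) ⬝ᵥ w + (sstar : Fin n → ℝ) ⬝ᵥ H.mulVec w
          + lam * ((sstar : Fin n → ℝ) ⬝ᵥ w)) 0 := by
      have hpoly : HasDerivAt (fun t : ℝ =>
          (f₀ + (g : Fin n → ℝ) ⬝ᵥ sstar + (1/2) * ((sstar : Fin n → ℝ) ⬝ᵥ H.mulVec sstar))
          + t * ((g : Fin n → ℝ) ⬝ᵥ w + (sstar : Fin n → ℝ) ⬝ᵥ H.mulVec w)
          + t ^ 2 * ((1/2) * ((w : Fin n → ℝ) ⬝ᵥ H.mulVec w)))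
          ((g : Fin n → ℝ) ⬝ᵥ w + (sstar : Fin n → ℝ) ⬝ᵥ H.mulVec w) 0 := by
        have h1 := ((hasDerivAt_id (0:ℝ)).mul_const
          ((g : Fin n → ℝ) ⬝ᵥ w + (sstar : Fin n → ℝ) ⬝ᵥ H.mulVec w)).const_add
          (f₀ + (g : Fin n → ℝ) ⬝ᵥ sstar + (1/2) * ((sstar : Fin n → ℝ) ⬝ᵥ H.mulVec sstar))
        have h2 := (hasDerivAt_pow 2 (0:ℝ)).mul_const
          ((1/2) * ((w : Fin n → ℝ) ⬝ᵥ H.mulVec w))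
        simpa [Pi.add_def] using h1.add h2
      have hcube := (hasDerivAt_norm_cube sstar w).const_mul (σ/3)
      have hsum := hpoly.add hcube
      have heq' : (g : Fin n → ℝ) ⬝ᵥ w + (sstar : Fin n → ℝ) ⬝ᵥ H.mulVec w
          + lam * ((sstar : Fin n → ℝ) ⬝ᵥ w)
          = ((g : Fin n → ℝ) ⬝ᵥ w + (sstar : Fin n → ℝ) ⬝ᵥ H.mulVec w)
            + σ/3 * (3 * ‖sstar‖ * ((sstar : Fin n → ℝ) ⬝ᵥ w)) := by
        rw [hlam]; ring
      rw [heq']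
      refine HasDerivAt.congr_of_eventuallyEq hsum ?_
      filter_upwards with t using (hline w t)
    have hloc : IsLocalMin (fun t : ℝ => m (sstar + t • w)) 0 := by
      have h0 : sstar + (0:ℝ) • w = sstar := by rw [zero_smul, add_zero]
      refine Filter.Eventually.of_forall fun t => ?_
      show m (sstar + (0:ℝ) • w) ≤ m (sstar + t • w)
      rw [h0]
      exact hmin _
    exact hloc.hasDerivAt_eq_zero hd
  -- the vector equation
  have hvz : (fun i => g i + H.mulVec sstar i + lam * sstar i) = (0 : Fin n → ℝ) := by
    set v : Fin n → ℝ := fun i => g i + H.mulVec sstar i + lam * sstar i with hv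
    rw [← dotProduct_self_eq_zero (v := v)]
    have hexp : v ⬝ᵥ v = (g : Fin n → ℝ) ⬝ᵥ v + (sstar : Fin n → ℝ) ⬝ᵥ H.mulVec v
        + lam * ((sstar : Fin n → ℝ) ⬝ᵥ v) := by
      have hsplit : v ⬝ᵥ v = (g : Fin n → ℝ) ⬝ᵥ v + (H.mulVec sstar) ⬝ᵥ v
          + lam * ((sstar : Fin n → ℝ) ⬝ᵥ v) := by
        simp only [dotProduct, Finset.mul_sum, ← Finset.sum_add_distrib]
        refine Finset.sum_congr rfl fun i _ => ?_
        show (g i + H.mulVec sstar i + lam * sstar i) * v i = _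
        ring
      rw [hsplit, dotProduct_comm (H.mulVec sstar) v, hsym v sstar]
    rw [hexp]
    exact hstat (WithLp.toLp 2 v)
  have heq : (H + lam • (1 : Matrix (Fin n) (Fin n) ℝ)).mulVec sstar = -g := by
    funext i
    have h1 : ((H + lam • (1 : Matrix (Fin n) (Fin n) ℝ)).mulVec sstar) i
        = H.mulVec sstar i + lam * sstar i := by
      rw [add_mulVec, smul_mulVec, one_mulVec]
      simp [Pi.add_apply, Pi.smul_apply, smul_eq_mul]
    have h2 := congrFun hvz i
    simp only [Pi.zero_apply] at h2
    show ((H + lam • (1 : Matrix (Fin n) (Fin n) ℝ)).mulVec sstar) i = -(g i)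
    rw [h1]
    linarith
  refine ⟨heq, posSemidef_iff_dotProduct_mulVec.mpr ⟨?_, ?_⟩⟩
  · -- Hermitian
    rw [Matrix.IsHermitian, conjTranspose_eq_transpose_of_trivial, transpose_add,
      transpose_smul, transpose_one, hH.eq]
  -- quadratic form nonnegativity
  have hkey : ∀ w : EuclideanSpace ℝ (Fin n), (sstar : Fin n → ℝ) ⬝ᵥ w ≠ 0 →
      0 ≤ (w : Fin n → ℝ) ⬝ᵥ H.mulVec w + lam * ‖w‖ ^ 2 := by
    intro w hc
    have hw0 : w ≠ 0 := by
      rintro rfl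
      exact hc (dotProduct_zero _)
    have hnw : (0:ℝ) < ‖w‖ := norm_pos_iff.mpr hw0
    set c : ℝ := (sstar : Fin n → ℝ) ⬝ᵥ w with hcdef
    set α : ℝ := -2 * c / ‖w‖ ^ 2 with hα
    have hns : ‖sstar + α • w‖ = ‖sstar‖ := by
      have h2 : ‖sstar + α • w‖ ^ 2 = ‖sstar‖ ^ 2 := by
        rw [normsq_line, ← hcdef, hα]
        field_simp
        ring
      exact (sq_eq_sq₀ (norm_nonneg _) (norm_nonneg _)).mp h2
    have h1 := hmin (sstar + α • w)
    rw [hline w α, hm sstar, hns] at h1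
    have h2 : 0 ≤ α * ((g : Fin n → ℝ) ⬝ᵥ w + (sstar : Fin n → ℝ) ⬝ᵥ H.mulVec w)
        + α ^ 2 * ((1/2) * ((w : Fin n → ℝ) ⬝ᵥ H.mulVec w)) := by linarith
    have h3 : (g : Fin n → ℝ) ⬝ᵥ w + (sstar : Fin n → ℝ) ⬝ᵥ H.mulVec w = -lam * c := by
      have h4 := hstat w
      rw [← hcdef] at h4
      linarith
    rw [h3] at h2
    have hfac : α * (-lam * c) + α ^ 2 * ((1/2) * ((w : Fin n → ℝ) ⬝ᵥ H.mulVec w))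
        = (2 * c ^ 2 / ‖w‖ ^ 4) * ((w : Fin n → ℝ) ⬝ᵥ H.mulVec w + lam * ‖w‖ ^ 2) := by
      rw [hα]
      field_simp
      ring
    rw [hfac] at h2
    have hc0 : c ≠ 0 := hc
    have hpos : 0 < 2 * c ^ 2 / ‖w‖ ^ 4 := by positivity
    nlinarith [h2, hpos]
  have hQ : ∀ x : EuclideanSpace ℝ (Fin n),
      0 ≤ (x : Fin n → ℝ) ⬝ᵥ H.mulVec x + lam * ‖x‖ ^ 2 := by
    intro x
    rcases eq_or_ne sstar 0 with h0 | h0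
    · -- sstar = 0
      have hlam0 : lam = 0 := by rw [hlam, h0, norm_zero, mul_zero]
      have hA : (g : Fin n → ℝ) ⬝ᵥ (sstar : Fin n → ℝ) = 0 := by
        rw [h0]; exact dotProduct_zero _
      have hB : (sstar : Fin n → ℝ) ⬝ᵥ H.mulVec sstar = 0 := by
        rw [h0]; exact zero_dotProduct _
      have hC : (sstar : Fin n → ℝ) ⬝ᵥ H.mulVec x = 0 := by
        rw [h0]; exact zero_dotProduct _
      have hgx : (g : Fin n → ℝ) ⬝ᵥ (x : Fin n → ℝ) = 0 := by
        have h5 := hstat x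
        have hCx : (sstar : Fin n → ℝ) ⬝ᵥ (x : Fin n → ℝ) = 0 := by
          rw [h0]; exact zero_dotProduct _
        rw [hC, hCx, hlam0] at h5
        linarith
      have hstep : ∀ t : ℝ, 0 < t →
          0 ≤ (1/2) * ((x : Fin n → ℝ) ⬝ᵥ H.mulVec x) + (σ/3) * t * ‖x‖ ^ 3 := by
        intro t ht
        have h1 := hmin (sstar + t • x)
        rw [hline x t, hm sstar] at h1
        have hnorm : ‖sstar + t • x‖ = t * ‖x‖ := by
          rw [h0, zero_add, norm_smul, Real.norm_eq_abs, abs_of_pos ht]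
        have hnorms : ‖sstar‖ = 0 := by rw [h0, norm_zero]
        rw [hA, hB, hC, hgx, hnorm, hnorms] at h1
        have ht2 : (0:ℝ) < t ^ 2 := by positivity
        nlinarith [h1, ht2, ht]
      have hcont : Continuous (fun t : ℝ => (1/2) * ((x : Fin n → ℝ) ⬝ᵥ H.mulVec x)
          + (σ/3) * t * ‖x‖ ^ 3) :=
        continuous_const.add (((continuous_const.mul continuous_id).mul continuous_const))
      have hlim := (hcont.tendsto' 0 ((1/2) * ((x : Fin n → ℝ) ⬝ᵥ H.mulVec x))
        (by norm_num)).mono_left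
        (nhdsWithin_le_nhds : nhdsWithin (0:ℝ) (Set.Ioi 0) ≤ nhds 0)
      have hhalf : 0 ≤ (1/2) * ((x : Fin n → ℝ) ⬝ᵥ H.mulVec x) := by
        refine ge_of_tendsto hlim ?_
        filter_upwards [self_mem_nhdsWithin] with t ht
        exact hstep t ht
      rw [hlam0]
      linarith
    · -- sstar ≠ 0
      have hns2 : (0:ℝ) < ‖sstar‖ ^ 2 := by
        have : (0:ℝ) < ‖sstar‖ := norm_pos_iff.mpr h0
        positivity
      have hdotε : ∀ ε : ℝ,
          (sstar : Fin n → ℝ) ⬝ᵥ ((x + ε • sstar : EuclideanSpace ℝ (Fin n)) : Fin n → ℝ)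
          = (sstar : Fin n → ℝ) ⬝ᵥ x + ε * ‖sstar‖ ^ 2 := by
        intro ε
        rw [coe_line, dotProduct_add, dotProduct_smul, smul_eq_mul, dot_self_eq_normsq]
      have hev : ∀ᶠ ε in nhdsWithin (0:ℝ) (Set.Ioi 0),
          (sstar : Fin n → ℝ) ⬝ᵥ ((x + ε • sstar : EuclideanSpace ℝ (Fin n)) : Fin n → ℝ) ≠ 0 := by
        rcases eq_or_ne ((sstar : Fin n → ℝ) ⬝ᵥ (x : Fin n → ℝ)) 0 with hc0 | hc0
        · filter_upwards [self_mem_nhdsWithin] with ε hε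
          rw [hdotε, hc0, zero_add]
          have : (0:ℝ) < ε := hε
          exact ne_of_gt (by positivity)
        · have hcont : Continuous (fun ε : ℝ =>
              (sstar : Fin n → ℝ) ⬝ᵥ (x : Fin n → ℝ) + ε * ‖sstar‖ ^ 2) := by continuity
          have hT := (hcont.tendsto' 0 ((sstar : Fin n → ℝ) ⬝ᵥ (x : Fin n → ℝ))
            (by norm_num)).mono_left
            (nhdsWithin_le_nhds : nhdsWithin (0:ℝ) (Set.Ioi 0) ≤ nhds 0)
          filter_upwards [hT.eventually_ne hc0] with ε hε
          rw [hdotε]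
          exact hε
      have hF : ∀ ε : ℝ,
          ((x + ε • sstar : EuclideanSpace ℝ (Fin n)) : Fin n → ℝ) ⬝ᵥ
              H.mulVec ((x + ε • sstar : EuclideanSpace ℝ (Fin n)) : Fin n → ℝ)
            + lam * ‖x + ε • sstar‖ ^ 2
          = ((x : Fin n → ℝ) ⬝ᵥ H.mulVec x + lam * ‖x‖ ^ 2)
            + ε * (2 * ((sstar : Fin n → ℝ) ⬝ᵥ H.mulVec x)
              + 2 * lam * ((x : Fin n → ℝ) ⬝ᵥ (sstar : Fin n → ℝ)))
            + ε ^ 2 * ((sstar : Fin n → ℝ) ⬝ᵥ H.mulVec sstar + lam * ‖sstar‖ ^ 2) := by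
        intro ε
        rw [coe_line, mulVec_add, mulVec_smul, add_dotProduct, smul_dotProduct,
          dotProduct_add, dotProduct_smul, dotProduct_add, dotProduct_smul,
          normsq_line, hsym x sstar]
        simp only [smul_eq_mul]
        ring
      have hcont2 : Continuous (fun ε : ℝ =>
          ((x : Fin n → ℝ) ⬝ᵥ H.mulVec x + lam * ‖x‖ ^ 2)
            + ε * (2 * ((sstar : Fin n → ℝ) ⬝ᵥ H.mulVec x)
              + 2 * lam * ((x : Fin n → ℝ) ⬝ᵥ (sstar : Fin n → ℝ)))
            + ε ^ 2 * ((sstar : Fin n → ℝ) ⬝ᵥ H.mulVec sstar + lam * ‖sstar‖ ^ 2)) :=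
        (continuous_const.add (continuous_id.mul continuous_const)).add
          ((continuous_pow 2).mul continuous_const)
      have hTF := (hcont2.tendsto' 0 ((x : Fin n → ℝ) ⬝ᵥ H.mulVec x + lam * ‖x‖ ^ 2)
        (by norm_num)).mono_left
        (nhdsWithin_le_nhds : nhdsWithin (0:ℝ) (Set.Ioi 0) ≤ nhds 0)
      refine ge_of_tendsto hTF ?_
      filter_upwards [hev] with ε hε
      rw [← hF ε]
      exact hkey (x + ε • sstar) hε
  · intro x
    have hx := hQ (WithLp.toLp 2 x)
    rw [← dot_self_eq_normsq (WithLp.toLp 2 x)] at hx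
    have hx2 : star (x : Fin n → ℝ) ⬝ᵥ ((H + lam • 1).mulVec x)
        = (x : Fin n → ℝ) ⬝ᵥ H.mulVec x + lam * ((x : Fin n → ℝ) ⬝ᵥ x) := by
      rw [star_trivial, add_mulVec, smul_mulVec, one_mulVec, dotProduct_add,
        dotProduct_smul, smul_eq_mul]
    rw [hx2]
    exact hx
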